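/- Let G be a groupoid, R an associative ring, and α = (D_g, α_g)_{g∈G} a partial action of G on R such that D_g is s-unital for every g ∈ G and R = ⊕_{e∈G₀} D_e. Then R is G-simple if, and only if, R ⋊_α G is graded simple. -/

import Mathlib

open scoped Classical

/-- A (discrete) groupoid, presented as its set of morphisms `G`, with source map `s`,
range map `r`, inversion `inv` and a partially defined multiplication `mul`.
The units (identity morphisms, i.e. the objects) are the elements `e` with `r e = e`. -/
structure DGroupoid (G : Type*) where
  s : G → G
  r : G → G
  inv : G → G
  mul : (g h : G) → s g = r h → G
  s_inv : ∀ g, s (inv g) = r g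
  r_inv : ∀ g, r (inv g) = s g
  inv_inv : ∀ g, inv (inv g) = g
  r_mul : ∀ g h (p : s g = r h), r (mul g h p) = r g
  s_mul : ∀ g h (p : s g = r h), s (mul g h p) = s h
  r_idem : ∀ g, r (r g) = r g
  s_of_r : ∀ g, s (r g) = r g
  r_of_s : ∀ g, r (s g) = s g
  s_idem : ∀ g, s (s g) = s g
  assoc : ∀ g h k (p : s g = r h) (q : s h = r k) (pq : s (mul g h p) = r k)
      (qp : s g = r (mul h k q)), mul (mul g h p) k pq = mul g (mul h k q) qp
  id_mul : ∀ g (p : s (r g) = r g), mul (r g) g p = g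
  mul_id : ∀ g (p : s g = r (s g)), mul g (s g) p = g
  mul_inv : ∀ g (p : s g = r (inv g)), mul g (inv g) p = r g
  inv_mul : ∀ g (p : s (inv g) = r g), mul (inv g) g p = s g

namespace DGroupoid

/-- `e` is a unit (an object, identified with its identity morphism) of the groupoid. -/
def unit {G : Type*} (𝔾 : DGroupoid G) (e : G) : Prop := 𝔾.r e = e

end DGroupoid

section RingDefs

variable {R : Type*} [NonUnitalRing R]

/-- A subset of a (possibly non-unital) ring is a two-sided ideal. -/
def IsRingIdeal (J : Set R) : Prop :=
  (0 : R) ∈ J ∧ (∀ x ∈ J, ∀ y ∈ J, x + y ∈ J) ∧ (∀ x ∈ J, -x ∈ J) ∧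
    ∀ x ∈ J, ∀ y : R, x * y ∈ J ∧ y * x ∈ J

/-- A subset of a ring, viewed as a ring, is s-unital: every `x` in it lies in
`xT ∩ Tx`. -/
def IsSUnitalSet (J : Set R) : Prop :=
  ∀ x ∈ J, (∃ u ∈ J, x * u = x) ∧ (∃ v ∈ J, v * x = x)

end RingDefs

/-- A partial action `α = (D_g, α_g)_{g ∈ G}` of a groupoid `𝔾` on a
(possibly non-unital, associative) ring `R`:  each `D_{r g}` is a two-sided ideal of `R`,
each `D_g` is a two-sided ideal of `D_{r g}`, and `α_g = act g` restricts to a ring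
isomorphism `D_{g⁻¹} → D_g` (the function `act g` is arbitrary outside `D_{g⁻¹}`),
satisfying the axioms of a partial action. -/
structure PartialAction {G : Type*} (𝔾 : DGroupoid G) (R : Type*) [NonUnitalRing R] where
  D : G → Set R
  zero_mem : ∀ g, (0 : R) ∈ D g
  add_mem : ∀ g, ∀ x ∈ D g, ∀ y ∈ D g, x + y ∈ D g
  neg_mem : ∀ g, ∀ x ∈ D g, -x ∈ D g
  subset_r : ∀ g, D g ⊆ D (𝔾.r g)
  idealR : ∀ g, IsRingIdeal (D (𝔾.r g))
  idealInR : ∀ g, ∀ x ∈ D g, ∀ y ∈ D (𝔾.r g), x * y ∈ D g ∧ y * x ∈ D g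
  act : G → R → R
  act_mem : ∀ g, ∀ x ∈ D (𝔾.inv g), act g x ∈ D g
  act_add : ∀ g, ∀ x ∈ D (𝔾.inv g), ∀ y ∈ D (𝔾.inv g), act g (x + y) = act g x + act g y
  act_mul : ∀ g, ∀ x ∈ D (𝔾.inv g), ∀ y ∈ D (𝔾.inv g), act g (x * y) = act g x * act g y
  act_inv : ∀ g, ∀ x ∈ D (𝔾.inv g), act (𝔾.inv g) (act g x) = x
  act_unit : ∀ e, 𝔾.unit e → ∀ x ∈ D e, act e x = x
  act_comp_mem : ∀ g h (p : 𝔾.s g = 𝔾.r h), ∀ x, x ∈ D (𝔾.inv g) → x ∈ D h →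
      act (𝔾.inv h) x ∈ D (𝔾.inv (𝔾.mul g h p))
  act_comp : ∀ g h (p : 𝔾.s g = 𝔾.r h), ∀ x ∈ D (𝔾.inv h), act h x ∈ D (𝔾.inv g) →
      act g (act h x) = act (𝔾.mul g h p) x

namespace PartialAction

variable {G : Type*} {R : Type*} [NonUnitalRing R] {𝔾 : DGroupoid G} (P : PartialAction 𝔾 R)

/-- `R = ⊕_{e ∈ G₀} D_e`: every element of `R` decomposes as a finite sum of elements
of the `D_e` (`e` a unit), and the decomposition is unique (a finite sum of elements of
the distinct `D_e`'s which vanishes has all terms zero). -/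
def directSum : Prop :=
  (∀ x : R, ∃ f : G →₀ R, (∀ g ∈ f.support, 𝔾.unit g) ∧ (∀ g, f g ∈ P.D g) ∧
      (f.sum fun _ v => v) = x) ∧
    ∀ f : G →₀ R, (∀ g ∈ f.support, 𝔾.unit g) → (∀ g, f g ∈ P.D g) →
      (f.sum fun _ v => v) = 0 → f = 0

/-- The carrier of the partial skew groupoid ring `R ⋊_α G`: finitely supported
functions `a : G →₀ R` (thought of as `Σ_g a_g δ_g`) with `a g ∈ D g`. -/
def carrier : Set (G →₀ R) := {a | ∀ g, a g ∈ P.D g}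

/-- The multiplication of the partial skew groupoid ring:
`(a_g δ_g)(b_h δ_h) = α_g(α_{g⁻¹}(a_g) b_h) δ_{gh}` when `(g,h)` is composable,
and `0` otherwise. -/
noncomputable def skewMul (a b : G →₀ R) : G →₀ R :=
  a.support.sum fun g => b.support.sum fun h =>
    if p : 𝔾.s g = 𝔾.r h then
      Finsupp.single (𝔾.mul g h p) (P.act g (P.act (𝔾.inv g) (a g) * b h))
    else 0

/-- The subset `⊕_{e ∈ G₀} D_e δ_e` of `R ⋊_α G`: elements supported on units. -/
def diag : Set (G →₀ R) := {a | (∀ g, a g ∈ P.D g) ∧ ∀ g ∈ a.support, 𝔾.unit g}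

/-- `I` is a two-sided ideal of the partial skew groupoid ring `R ⋊_α G`. -/
def IsSkewIdeal (I : Set (G →₀ R)) : Prop :=
  I ⊆ P.carrier ∧ (0 : G →₀ R) ∈ I ∧ (∀ x ∈ I, ∀ y ∈ I, x + y ∈ I) ∧ (∀ x ∈ I, -x ∈ I) ∧
    ∀ x ∈ I, ∀ y ∈ P.carrier, P.skewMul x y ∈ I ∧ P.skewMul y x ∈ I

/-- The projection `P₀ : R ⋊_α G → R`, `Σ_g a_g δ_g ↦ Σ_{e ∈ G₀} a_e`. -/
noncomputable def P0 (_P : PartialAction 𝔾 R) (a : G →₀ R) : R :=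
  a.sum fun g v => if 𝔾.unit g then v else 0

/-- An ideal `I` of `R ⋊_α G` is `G`-graded if it is generated by its homogeneous
components, i.e. `I = ⊕_g (I ∩ D_g δ_g)`. -/
def IsGradedIdeal (I : Set (G →₀ R)) : Prop :=
  P.IsSkewIdeal I ∧ ∀ a ∈ I, ∀ g : G, Finsupp.single g (a g) ∈ I

/-- `J` is a `G`-invariant (two-sided) ideal of `R`: `α_g(D_{g⁻¹} ∩ J) ⊆ J`. -/
def IsInvIdeal (J : Set R) : Prop :=
  IsRingIdeal J ∧ ∀ g, ∀ x ∈ P.D (𝔾.inv g) ∩ J, P.act g x ∈ J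

/-- The subset `J ⋊_{α^J} G = ⊕_g (J ∩ D_g) δ_g` of `R ⋊_α G` attached to a
`G`-invariant ideal `J` of `R`. -/
def skewOf (J : Set R) : Set (G →₀ R) := {a | ∀ g, a g ∈ P.D g ∩ J}

/-- `⊕_{e ∈ G₀} D_e δ_e` is a maximal commutative subring of `R ⋊_α G`: it is
commutative and coincides with its centralizer. -/
def IsMaxCommDiag : Prop :=
  (∀ a ∈ P.diag, ∀ b ∈ P.diag, P.skewMul a b = P.skewMul b a) ∧
    ∀ b ∈ P.carrier, (∀ a ∈ P.diag, P.skewMul a b = P.skewMul b a) → b ∈ P.diag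

/-- The partial action has the intersection property: every nonzero ideal of
`R ⋊_α G` intersects `⊕_{e ∈ G₀} D_e δ_e` nontrivially. -/
def HasIntersectionProperty : Prop :=
  ∀ I : Set (G →₀ R), P.IsSkewIdeal I → I ≠ {0} → I ∩ P.diag ≠ {0}

/-- `R` is `G`-simple: the only `G`-invariant ideals of `R` are `{0}` and `R`. -/
def GSimple : Prop := ∀ J : Set R, P.IsInvIdeal J → J = {0} ∨ J = Set.univ

/-- `R` is `G`-prime: if `I, J` are `G`-invariant ideals with `IJ = {0}`, then
`I = {0}` or `J = {0}`. -/
def GPrime : Prop :=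
  ∀ I J : Set R, P.IsInvIdeal I → P.IsInvIdeal J →
    (∀ x ∈ I, ∀ y ∈ J, x * y = 0) → I = {0} ∨ J = {0}

/-- `R ⋊_α G` is graded simple. -/
def GradedSimple : Prop :=
  ∀ I : Set (G →₀ R), P.IsGradedIdeal I → I = {0} ∨ I = P.carrier

/-- `R ⋊_α G` is graded prime. -/
def GradedPrime : Prop :=
  ∀ I J : Set (G →₀ R), P.IsGradedIdeal I → P.IsGradedIdeal J →
    (∀ x ∈ I, ∀ y ∈ J, P.skewMul x y = 0) → I = {0} ∨ J = {0}

/-- `R ⋊_α G` is a prime ring. -/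
def SkewPrime : Prop :=
  ∀ I J : Set (G →₀ R), P.IsSkewIdeal I → P.IsSkewIdeal J →
    (∀ x ∈ I, ∀ y ∈ J, P.skewMul x y = 0) → I = {0} ∨ J = {0}

/-- `R ⋊_α G` is a simple ring. -/
def SkewSimple : Prop :=
  ∀ I : Set (G →₀ R), P.IsSkewIdeal I → I = {0} ∨ I = P.carrier

end PartialAction


section Aux

namespace DGroupoid

variable {G : Type*} (𝔾 : DGroupoid G)

theorem mul_congr {g g' h h' : G} (hg : g = g') (hh : h = h')
    (p : 𝔾.s g = 𝔾.r h) (p' : 𝔾.s g' = 𝔾.r h') : 𝔾.mul g h p = 𝔾.mul g' h' p' := by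
  subst hg; subst hh; rfl

theorem s_unit {e : G} (he : 𝔾.unit e) : 𝔾.s e = e := by
  have h := 𝔾.s_of_r e
  rwa [he] at h

theorem unit_r (g : G) : 𝔾.unit (𝔾.r g) := 𝔾.r_idem g

theorem unit_s (g : G) : 𝔾.unit (𝔾.s g) := 𝔾.r_of_s g

theorem inv_unit {e : G} (he : 𝔾.unit e) : 𝔾.inv e = e := by
  have hre : 𝔾.r (𝔾.inv e) = e := by rw [𝔾.r_inv, 𝔾.s_unit he]
  have p1 : 𝔾.s (𝔾.r (𝔾.inv e)) = 𝔾.r (𝔾.inv e) := 𝔾.s_of_r _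
  have p2 : 𝔾.s e = 𝔾.r (𝔾.inv e) := by rw [hre, 𝔾.s_unit he]
  calc 𝔾.inv e = 𝔾.mul (𝔾.r (𝔾.inv e)) (𝔾.inv e) p1 := (𝔾.id_mul _ p1).symm
    _ = 𝔾.mul e (𝔾.inv e) p2 := 𝔾.mul_congr hre rfl _ _
    _ = 𝔾.r e := 𝔾.mul_inv e p2
    _ = e := he

theorem unit_mul_self {e : G} (he : 𝔾.unit e) (p : 𝔾.s e = 𝔾.r e) : 𝔾.mul e e p = e := by
  have p' : 𝔾.s (𝔾.r e) = 𝔾.r e := 𝔾.s_of_r e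
  calc 𝔾.mul e e p = 𝔾.mul (𝔾.r e) e p' := 𝔾.mul_congr he.symm rfl _ _
    _ = e := 𝔾.id_mul e p'

end DGroupoid

/-- The total sum `Σ_g a_g` as an additive homomorphism. -/
noncomputable def totHom (G R : Type*) [NonUnitalRing R] : (G →₀ R) →+ R :=
  Finsupp.liftAddHom fun _ => AddMonoidHom.id R

theorem totHom_apply {G R : Type*} [NonUnitalRing R] (f : G →₀ R) :
    totHom G R f = f.sum fun _ v => v := rfl

theorem totHom_single {G R : Type*} [NonUnitalRing R] (g : G) (a : R) :
    totHom G R (Finsupp.single g a) = a := by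
  rw [totHom_apply, Finsupp.sum_single_index rfl]

theorem exists_ne_zero_of_ne_singleton {M : Type*} [Zero M] {S : Set M}
    (h0 : (0 : M) ∈ S) (h : S ≠ {0}) : ∃ x ∈ S, x ≠ 0 := by
  by_contra hc
  push_neg at hc
  exact h (Set.eq_singleton_iff_unique_mem.mpr ⟨h0, fun x hx => hc x hx⟩)

namespace PartialAction

variable {G R : Type*} [NonUnitalRing R] {𝔾 : DGroupoid G} (P : PartialAction 𝔾 R)

theorem act_zero (g : G) : P.act g 0 = 0 := by
  have h := P.act_add g 0 (P.zero_mem _) 0 (P.zero_mem _)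
  rw [add_zero] at h
  exact left_eq_add.mp h

theorem mem_D_inv_inv {g : G} {x : R} (hx : x ∈ P.D g) : x ∈ P.D (𝔾.inv (𝔾.inv g)) := by
  rw [𝔾.inv_inv]; exact hx

theorem act_act {g : G} {x : R} (hx : x ∈ P.D g) : P.act g (P.act (𝔾.inv g) x) = x := by
  have h := P.act_inv (𝔾.inv g) x (P.mem_D_inv_inv hx)
  rwa [𝔾.inv_inv] at h

theorem act_mem_inv {g : G} {x : R} (hx : x ∈ P.D g) : P.act (𝔾.inv g) x ∈ P.D (𝔾.inv g) :=
  P.act_mem (𝔾.inv g) x (P.mem_D_inv_inv hx)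

/-- `α_g(D_{g⁻¹} ∩ D_h) ⊆ D_{gh}`. -/
theorem act_mem_mul {g h : G} (p : 𝔾.s g = 𝔾.r h) {z : R}
    (hz1 : z ∈ P.D (𝔾.inv g)) (hz2 : z ∈ P.D h) : P.act g z ∈ P.D (𝔾.mul g h p) := by
  have hw : P.act (𝔾.inv h) z ∈ P.D (𝔾.inv (𝔾.mul g h p)) := P.act_comp_mem g h p z hz1 hz2
  have hw' : P.act (𝔾.inv h) z ∈ P.D (𝔾.inv h) := P.act_mem_inv hz2
  have hzw : P.act h (P.act (𝔾.inv h) z) = z := P.act_act hz2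
  have heq : P.act g (P.act h (P.act (𝔾.inv h) z)) = P.act (𝔾.mul g h p) (P.act (𝔾.inv h) z) :=
    P.act_comp g h p _ hw' (by rw [hzw]; exact hz1)
  rw [hzw] at heq
  rw [heq]
  exact P.act_mem _ _ hw

theorem unit_ideal {e : G} (he : 𝔾.unit e) : IsRingIdeal (P.D e) := by
  have h := P.idealR e
  rwa [he] at h


/-- Uniqueness of decompositions over the units. -/
theorem decomp_unique (hds : P.directSum) {x : R} {f f' : G →₀ R}
    (h1 : ∀ g ∈ f.support, 𝔾.unit g) (h2 : ∀ g, f g ∈ P.D g)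
    (h3 : (f.sum fun _ v => v) = x)
    (h1' : ∀ g ∈ f'.support, 𝔾.unit g) (h2' : ∀ g, f' g ∈ P.D g)
    (h3' : (f'.sum fun _ v => v) = x) : f = f' := by
  have key := hds.2 (f - f') ?_ ?_ ?_
  · exact sub_eq_zero.mp key
  · intro g hg
    rw [Finsupp.mem_support_iff, Finsupp.sub_apply, sub_ne_zero] at hg
    by_cases hf : f g = 0
    · exact h1' g (Finsupp.mem_support_iff.mpr fun h0 => hg (by rw [hf, h0]))
    · exact h1 g (Finsupp.mem_support_iff.mpr hf)
  · intro g
    rw [Finsupp.sub_apply, sub_eq_add_neg]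
    exact P.add_mem g _ (h2 g) _ (P.neg_mem g _ (h2' g))
  · rw [← totHom_apply, map_sub, totHom_apply, totHom_apply, h3, h3', sub_self]

/-- Distinct `D_e`'s (for units `e`) intersect trivially. -/
theorem inter_units_eq_zero (hds : P.directSum) {e e' : G} (he : 𝔾.unit e)
    (he' : 𝔾.unit e') (hne : e ≠ e') {c : R} (hc : c ∈ P.D e) (hc' : c ∈ P.D e') :
    c = 0 := by
  have key := hds.2 (Finsupp.single e c - Finsupp.single e' c) ?_ ?_ ?_
  · have hcc : (Finsupp.single e c - Finsupp.single e' c) e = c := by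
      rw [Finsupp.sub_apply, Finsupp.single_apply, Finsupp.single_apply,
        if_pos rfl, if_neg (fun h => hne h.symm), sub_zero]
    rw [key] at hcc
    exact hcc.symm
  · intro g hg
    have := Finsupp.support_sub hg
    rw [Finset.mem_union] at this
    rcases this with h | h
    · have := Finsupp.support_single_subset h
      rw [Finset.mem_singleton] at this
      exact this ▸ he
    · have := Finsupp.support_single_subset h
      rw [Finset.mem_singleton] at this
      exact this ▸ he'
  · intro g
    rw [Finsupp.sub_apply, Finsupp.single_apply, Finsupp.single_apply]
    by_cases hge : e = g
    · subst hge
      rw [if_pos rfl, if_neg (fun h => hne h.symm), sub_zero]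
      exact hc
    · by_cases hge' : e' = g
      · subst hge'
        rw [if_neg hge, if_pos rfl, zero_sub]
        exact P.neg_mem _ _ hc'
      · rw [if_neg hge, if_neg hge', sub_zero]
        exact P.zero_mem _
  · rw [← totHom_apply, map_sub, totHom_single, totHom_single, sub_self]

/-- Orthogonality: `D_e · D_{e'} = 0` for distinct units. -/
theorem mul_eq_zero_units (hds : P.directSum) {e e' : G} (he : 𝔾.unit e)
    (he' : 𝔾.unit e') (hne : e ≠ e') {a b : R} (ha : a ∈ P.D e) (hb : b ∈ P.D e') :
    a * b = 0 := by
  have h1 : a * b ∈ P.D e := ((P.unit_ideal he).2.2.2 a ha b).1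
  have h2 : a * b ∈ P.D e' := ((P.unit_ideal he').2.2.2 b hb a).2
  exact P.inter_units_eq_zero hds he he' hne h1 h2

/-- The components (over units) of an element of an ideal `J` lie in `J`. -/
theorem comp_mem (hds : P.directSum) (hsu : ∀ g, IsSUnitalSet (P.D g))
    {J : Set R} (hJ : IsRingIdeal J) {x : R} (hx : x ∈ J) {f : G →₀ R}
    (h1 : ∀ g ∈ f.support, 𝔾.unit g) (h2 : ∀ g, f g ∈ P.D g)
    (h3 : (f.sum fun _ v => v) = x) {e : G} (he : e ∈ f.support) : f e ∈ J := by
  obtain ⟨u, hu, huu⟩ := (hsu e (f e) (h2 e)).1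
  have hxu : x * u ∈ J := (hJ.2.2.2 x hx u).1
  have hcalc : x * u = f e := by
    rw [← h3]
    unfold Finsupp.sum
    rw [Finset.sum_mul]
    rw [Finset.sum_eq_single_of_mem e he]
    · exact huu
    · intro e' he' hne
      exact P.mul_eq_zero_units hds (h1 e' he') (h1 e he) hne (h2 e') hu
  exact hcalc ▸ hxu

theorem skewMul_single_single (g h : G) (a b : R) :
    P.skewMul (Finsupp.single g a) (Finsupp.single h b) =
      if p : 𝔾.s g = 𝔾.r h then
        Finsupp.single (𝔾.mul g h p) (P.act g (P.act (𝔾.inv g) a * b)) else 0 := by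
  unfold skewMul
  by_cases ha0 : a = 0
  · subst ha0
    rw [Finsupp.single_zero, Finsupp.support_zero, Finset.sum_empty]
    split
    · rw [P.act_zero, zero_mul, P.act_zero, Finsupp.single_zero]
    · rfl
  by_cases hb0 : b = 0
  · subst hb0
    rw [Finsupp.single_zero, Finsupp.support_zero]
    simp only [Finset.sum_empty, Finset.sum_const_zero]
    split
    · rw [mul_zero, P.act_zero, Finsupp.single_zero]
    · rfl
  · rw [Finsupp.support_single_ne_zero _ ha0, Finsupp.support_single_ne_zero _ hb0,
      Finset.sum_singleton, Finset.sum_singleton, Finsupp.single_eq_same,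
      Finsupp.single_eq_same]

theorem skewMul_single_unit {e : G} (he : 𝔾.unit e) {a b : R}
    (ha : a ∈ P.D e) (hb : b ∈ P.D e) :
    P.skewMul (Finsupp.single e a) (Finsupp.single e b) = Finsupp.single e (a * b) := by
  have p : 𝔾.s e = 𝔾.r e := by rw [𝔾.s_unit he, he]
  rw [P.skewMul_single_single, dif_pos p]
  have h1 : P.act (𝔾.inv e) a = a := by
    rw [𝔾.inv_unit he]
    exact P.act_unit e he a ha
  have hab : a * b ∈ P.D e := ((P.unit_ideal he).2.2.2 a ha b).1
  rw [h1, P.act_unit e he _ hab, 𝔾.unit_mul_self he p]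

/-- Membership of a skew product in an additively closed set containing the terms. -/
theorem skewMul_mem {S : Set (G →₀ R)} (h0 : (0 : G →₀ R) ∈ S)
    (hadd : ∀ x ∈ S, ∀ y ∈ S, x + y ∈ S) {a b : G →₀ R}
    (hterm : ∀ g ∈ a.support, ∀ h ∈ b.support, ∀ p : 𝔾.s g = 𝔾.r h,
      Finsupp.single (𝔾.mul g h p) (P.act g (P.act (𝔾.inv g) (a g) * b h)) ∈ S) :
    P.skewMul a b ∈ S := by
  unfold skewMul
  apply Finset.sum_induction _ (· ∈ S) (fun x y hx hy => hadd x hx y hy) h0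
  intro g hg
  apply Finset.sum_induction _ (· ∈ S) (fun x y hx hy => hadd x hx y hy) h0
  intro h hh
  by_cases p : 𝔾.s g = 𝔾.r h
  · rw [dif_pos p]
    exact hterm g hg h hh p
  · rw [dif_neg p]
    exact h0

theorem single_mem_carrier {g : G} {a : R} (ha : a ∈ P.D g) :
    Finsupp.single g a ∈ P.carrier := by
  intro k
  rw [Finsupp.single_apply]
  split
  · next hk => exact hk ▸ ha
  · exact P.zero_mem _

theorem single_mem_skewOf {J : Set R} (hJ0 : (0 : R) ∈ J) {g : G} {a : R}
    (ha : a ∈ P.D g ∩ J) : Finsupp.single g a ∈ P.skewOf J := by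
  intro k
  rw [Finsupp.single_apply]
  split
  · next hk => exact hk ▸ ha
  · exact ⟨P.zero_mem _, hJ0⟩


/-- The coefficient of a term of a skew product with one factor in `J`. -/
theorem term_mem {J : Set R} (hJ : P.IsInvIdeal J) {g h : G} (p : 𝔾.s g = 𝔾.r h)
    {a b : R} (ha : a ∈ P.D g) (hb : b ∈ P.D h) (hab : a ∈ J ∨ b ∈ J) :
    P.act g (P.act (𝔾.inv g) a * b) ∈ P.D (𝔾.mul g h p) ∩ J := by
  have hz0D : P.act (𝔾.inv g) a ∈ P.D (𝔾.inv g) := P.act_mem_inv ha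
  have hbr : b ∈ P.D (𝔾.r (𝔾.inv g)) := by
    rw [𝔾.r_inv, p]
    exact P.subset_r h hb
  have hz0r : P.act (𝔾.inv g) a ∈ P.D (𝔾.r h) := by
    rw [← p, ← 𝔾.r_inv]
    exact P.subset_r _ hz0D
  have hzDg : P.act (𝔾.inv g) a * b ∈ P.D (𝔾.inv g) :=
    (P.idealInR (𝔾.inv g) _ hz0D b hbr).1
  have hzDh : P.act (𝔾.inv g) a * b ∈ P.D h :=
    (P.idealInR h b hb _ hz0r).2
  have hzJ : P.act (𝔾.inv g) a * b ∈ J := by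
    rcases hab with haJ | hbJ
    · have hz0J : P.act (𝔾.inv g) a ∈ J := hJ.2 (𝔾.inv g) a ⟨P.mem_D_inv_inv ha, haJ⟩
      exact (hJ.1.2.2.2 _ hz0J b).1
    · exact (hJ.1.2.2.2 b hbJ _).2
  exact ⟨P.act_mem_mul p hzDg hzDh, hJ.2 g _ ⟨hzDg, hzJ⟩⟩

/-- `J ⋊ G` is a graded ideal of `R ⋊ G` for a `G`-invariant ideal `J`. -/
theorem skewOf_graded {J : Set R} (hJ : P.IsInvIdeal J) :
    P.IsGradedIdeal (P.skewOf J) := by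
  have hadd : ∀ x ∈ P.skewOf J, ∀ y ∈ P.skewOf J, x + y ∈ P.skewOf J := by
    intro x hx y hy g
    rw [Finsupp.add_apply]
    exact ⟨P.add_mem g _ (hx g).1 _ (hy g).1, hJ.1.2.1 _ (hx g).2 _ (hy g).2⟩
  have h0 : (0 : G →₀ R) ∈ P.skewOf J := fun g => ⟨P.zero_mem g, hJ.1.1⟩
  refine ⟨⟨fun x hx g => (hx g).1, h0, hadd, ?_, ?_⟩, ?_⟩
  · intro x hx g
    rw [Finsupp.neg_apply]
    exact ⟨P.neg_mem g _ (hx g).1, hJ.1.2.2.1 _ (hx g).2⟩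
  · intro x hx y hy
    constructor
    · apply P.skewMul_mem h0 hadd
      intro g _ h _ p
      exact P.single_mem_skewOf hJ.1.1 (P.term_mem hJ p (hx g).1 (hy h) (Or.inl (hx g).2))
    · apply P.skewMul_mem h0 hadd
      intro g _ h _ p
      exact P.single_mem_skewOf hJ.1.1 (P.term_mem hJ p (hy g) (hx h).1 (Or.inr (hx h).2))
  · intro a ha g
    exact P.single_mem_skewOf hJ.1.1 (ha g)

/-- Graded simplicity of `R ⋊ G` implies `G`-simplicity of `R`. -/
theorem gSimple_of_gradedSimple (hsu : ∀ g, IsSUnitalSet (P.D g)) (hds : P.directSum)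
    (hgs : P.GradedSimple) : P.GSimple := by
  intro J hJ
  by_cases hJ0 : J = {0}
  · exact Or.inl hJ0
  right
  obtain ⟨x, hxJ, hx0⟩ := exists_ne_zero_of_ne_singleton hJ.1.1 hJ0
  obtain ⟨f, hu, hm, hs⟩ := hds.1 x
  have hf0 : f ≠ 0 := by
    intro h
    rw [h, Finsupp.sum_zero_index] at hs
    exact hx0 hs.symm
  obtain ⟨e, he⟩ := Finsupp.support_nonempty_iff.mpr hf0
  have hfeJ : f e ∈ J := P.comp_mem hds hsu hJ.1 hxJ hu hm hs he
  have hfene : f e ≠ 0 := Finsupp.mem_support_iff.mp he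
  rcases hgs (P.skewOf J) (P.skewOf_graded hJ) with hcase | hcase
  · exfalso
    have hmem : Finsupp.single e (f e) ∈ P.skewOf J :=
      P.single_mem_skewOf hJ.1.1 ⟨hm e, hfeJ⟩
    rw [hcase] at hmem
    exact hfene (Finsupp.single_eq_zero.mp hmem)
  · ext y
    simp only [Set.mem_univ, iff_true]
    obtain ⟨f', hu', hm', hs'⟩ := hds.1 y
    have hf'c : f' ∈ P.skewOf J := by
      rw [hcase]
      exact hm'
    rw [← hs']
    unfold Finsupp.sum
    apply Finset.sum_induction _ (· ∈ J) (fun a b haa hbb => hJ.1.2.1 a haa b hbb) hJ.1.1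
    intro g _
    exact (hf'c g).2


/-- `G`-simplicity of `R` implies graded simplicity of `R ⋊ G`. -/
theorem gradedSimple_of_gSimple (hsu : ∀ g, IsSUnitalSet (P.D g)) (hds : P.directSum)
    (hg : P.GSimple) : P.GradedSimple := by
  intro I hI
  by_cases hI0 : I = {0}
  · exact Or.inl hI0
  right
  have hIcar := hI.1.1
  have hI0mem := hI.1.2.1
  have hIadd := hI.1.2.2.1
  have hIneg := hI.1.2.2.2.1
  have hImul := hI.1.2.2.2.2
  have hIgr := hI.2
  set J : Set R := {x : R | ∃ f : G →₀ R, (∀ g ∈ f.support, 𝔾.unit g) ∧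
    (∀ g, f g ∈ P.D g) ∧ (f.sum fun _ v => v) = x ∧ f ∈ I} with hJdef
  -- single e c (e a unit, c ∈ D e) is the unique decomposition of c
  have sdec : ∀ e c, 𝔾.unit e → c ∈ P.D e →
      (∀ g ∈ (Finsupp.single e c).support, 𝔾.unit g) ∧
        (∀ g, (Finsupp.single e c) g ∈ P.D g) ∧
          (((Finsupp.single e c).sum fun _ v => v) = c) := by
    intro e c he hc
    refine ⟨?_, ?_, Finsupp.sum_single_index rfl⟩
    · intro g hgmem
      have hh := Finsupp.support_single_subset hgmem
      rw [Finset.mem_singleton] at hh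
      exact hh ▸ he
    · intro g
      rw [Finsupp.single_apply]
      split
      · next hh => exact hh ▸ hc
      · exact P.zero_mem _
  have memJ : ∀ e c, 𝔾.unit e → c ∈ P.D e → Finsupp.single e c ∈ I → c ∈ J := by
    intro e c he hc hmem
    exact ⟨Finsupp.single e c, (sdec e c he hc).1, (sdec e c he hc).2.1,
      (sdec e c he hc).2.2, hmem⟩
  have singleI : ∀ e c, 𝔾.unit e → c ∈ P.D e → c ∈ J → Finsupp.single e c ∈ I := by
    intro e c he hc hcJ
    obtain ⟨f, h1, h2, h3, h4⟩ := hcJ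
    have heq : f = Finsupp.single e c := P.decomp_unique hds h1 h2 h3
      (sdec e c he hc).1 (sdec e c he hc).2.1 (sdec e c he hc).2.2
    exact heq ▸ h4
  -- pushing a homogeneous element of I to a unit component
  have push : ∀ g c, c ∈ P.D g → Finsupp.single g c ∈ I →
      Finsupp.single (𝔾.r g) c ∈ I := by
    intro g c hc hmem
    have hc' : P.act (𝔾.inv g) c ∈ P.D (𝔾.inv g) := P.act_mem_inv hc
    obtain ⟨v, hv, hvv⟩ := (hsu (𝔾.inv g) _ hc').1
    have hsm := (hImul _ hmem _ (P.single_mem_carrier hv)).1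
    have p : 𝔾.s g = 𝔾.r (𝔾.inv g) := (𝔾.r_inv g).symm
    rw [P.skewMul_single_single, dif_pos p, hvv, P.act_act hc, 𝔾.mul_inv g p] at hsm
    exact hsm
  -- J is nonzero
  obtain ⟨a, haI, ha0⟩ := exists_ne_zero_of_ne_singleton hI0mem hI0
  obtain ⟨g₀, hg₀⟩ : ∃ g, a g ≠ 0 := by
    by_contra hcon
    push_neg at hcon
    exact ha0 (Finsupp.ext hcon)
  have hag : a g₀ ∈ P.D g₀ := hIcar haI g₀
  have hagJ : a g₀ ∈ J := memJ _ _ (𝔾.unit_r g₀) (P.subset_r _ hag)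
    (push _ _ hag (hIgr a haI g₀))
  have hJne : J ≠ {0} := by
    intro hh
    rw [hh] at hagJ
    exact hg₀ hagJ
  -- J is a ring ideal
  have hJideal : IsRingIdeal J := by
    refine ⟨?_, ?_, ?_, ?_⟩
    · refine ⟨0, ?_, fun g => P.zero_mem g, Finsupp.sum_zero_index, hI0mem⟩
      intro g hgmem
      rw [Finsupp.support_zero] at hgmem
      exact absurd hgmem (Finset.notMem_empty g)
    · rintro x ⟨f, hf1, hf2, hf3, hf4⟩ y ⟨f', hf1', hf2', hf3', hf4'⟩
      refine ⟨f + f', ?_, ?_, ?_, hIadd f hf4 f' hf4'⟩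
      · intro g hgmem
        rcases Finset.mem_union.mp (Finsupp.support_add hgmem) with hh | hh
        · exact hf1 g hh
        · exact hf1' g hh
      · intro g
        rw [Finsupp.add_apply]
        exact P.add_mem g _ (hf2 g) _ (hf2' g)
      · rw [← totHom_apply, map_add, totHom_apply, totHom_apply, hf3, hf3']
    · rintro x ⟨f, hf1, hf2, hf3, hf4⟩
      refine ⟨-f, ?_, ?_, ?_, hIneg f hf4⟩
      · intro g hgmem
        rw [Finsupp.support_neg] at hgmem
        exact hf1 g hgmem
      · intro g
        rw [Finsupp.neg_apply]
        exact P.neg_mem g _ (hf2 g)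
      · rw [← totHom_apply, map_neg, totHom_apply, hf3]
    · rintro x ⟨f, hf1, hf2, hf3, hf4⟩ y
      obtain ⟨h, hh1, hh2, hh3⟩ := hds.1 y
      have hx' : x = ∑ e ∈ f.support, f e := by rw [← hf3]; rfl
      have hy' : y = ∑ e ∈ h.support, h e := by rw [← hh3]; rfl
      constructor
      · -- x * y ∈ J
        refine ⟨∑ e ∈ f.support, Finsupp.single e (f e * h e), ?_, ?_, ?_, ?_⟩
        · intro k hk
          rw [Finsupp.mem_support_iff, Finsupp.finset_sum_apply] at hk
          simp only [Finsupp.single_apply] at hk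
          rw [Finset.sum_ite_eq' f.support k (fun e => f e * h e)] at hk
          by_cases hks : k ∈ f.support
          · exact hf1 k hks
          · rw [if_neg hks] at hk
            exact absurd rfl hk
        · intro k
          rw [Finsupp.finset_sum_apply]
          simp only [Finsupp.single_apply]
          rw [Finset.sum_ite_eq' f.support k (fun e => f e * h e)]
          by_cases hks : k ∈ f.support
          · rw [if_pos hks]
            exact (P.idealInR k _ (hf2 k) _ (P.subset_r k (hh2 k))).1
          · rw [if_neg hks]
            exact P.zero_mem _
        · rw [← totHom_apply, map_sum]
          have hxy : x * y = ∑ e ∈ f.support, f e * h e := by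
            rw [hx', hy', Finset.sum_mul_sum]
            apply Finset.sum_congr rfl
            intro e he
            apply Finset.sum_eq_single e
            · intro e' he' hne
              exact P.mul_eq_zero_units hds (hf1 e he) (hh1 e' he')
                (fun q => hne q.symm) (hf2 e) (hh2 e')
            · intro hnot
              rw [Finsupp.notMem_support_iff.mp hnot, mul_zero]
          rw [hxy]
          exact Finset.sum_congr rfl fun e _ => totHom_single _ _
        · apply Finset.sum_induction _ (· ∈ I) (fun u v hu hv => hIadd u hu v hv) hI0mem
          intro e he
          have hterm := (hImul _ (hIgr f hf4 e) _ (P.single_mem_carrier (hh2 e))).1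
          rwa [P.skewMul_single_unit (hf1 e he) (hf2 e) (hh2 e)] at hterm
      · -- y * x ∈ J
        refine ⟨∑ e ∈ f.support, Finsupp.single e (h e * f e), ?_, ?_, ?_, ?_⟩
        · intro k hk
          rw [Finsupp.mem_support_iff, Finsupp.finset_sum_apply] at hk
          simp only [Finsupp.single_apply] at hk
          rw [Finset.sum_ite_eq' f.support k (fun e => h e * f e)] at hk
          by_cases hks : k ∈ f.support
          · exact hf1 k hks
          · rw [if_neg hks] at hk
            exact absurd rfl hk
        · intro k
          rw [Finsupp.finset_sum_apply]
          simp only [Finsupp.single_apply]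
          rw [Finset.sum_ite_eq' f.support k (fun e => h e * f e)]
          by_cases hks : k ∈ f.support
          · rw [if_pos hks]
            exact (P.idealInR k _ (hf2 k) _ (P.subset_r k (hh2 k))).2
          · rw [if_neg hks]
            exact P.zero_mem _
        · rw [← totHom_apply, map_sum]
          have hxy : y * x = ∑ e ∈ f.support, h e * f e := by
            rw [hx', hy', Finset.sum_mul_sum, Finset.sum_comm]
            apply Finset.sum_congr rfl
            intro e he
            apply Finset.sum_eq_single e
            · intro e' he' hne
              exact P.mul_eq_zero_units hds (hh1 e' he') (hf1 e he)
                hne (hh2 e') (hf2 e)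
            · intro hnot
              rw [Finsupp.notMem_support_iff.mp hnot, zero_mul]
          rw [hxy]
          exact Finset.sum_congr rfl fun e _ => totHom_single _ _
        · apply Finset.sum_induction _ (· ∈ I) (fun u v hu hv => hIadd u hu v hv) hI0mem
          intro e he
          have hterm := (hImul _ (hIgr f hf4 e) _ (P.single_mem_carrier (hh2 e))).2
          rwa [P.skewMul_single_unit (hf1 e he) (hh2 e) (hf2 e)] at hterm
  -- J is G-invariant
  have hJinv : ∀ g, ∀ x ∈ P.D (𝔾.inv g) ∩ J, P.act g x ∈ J := by
    intro g x hx
    have hxs : x ∈ P.D (𝔾.s g) := by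
      rw [← 𝔾.r_inv]
      exact P.subset_r _ hx.1
    have hsingle : Finsupp.single (𝔾.s g) x ∈ I := singleI _ _ (𝔾.unit_s g) hxs hx.2
    have hact : P.act g x ∈ P.D g := P.act_mem g x hx.1
    obtain ⟨u, hu, huu⟩ := (hsu g _ hact).2
    have hsm := (hImul _ hsingle _ (P.single_mem_carrier hu)).2
    have p : 𝔾.s g = 𝔾.r (𝔾.s g) := (𝔾.r_of_s g).symm
    rw [P.skewMul_single_single, dif_pos p] at hsm
    have hconv : P.act g (P.act (𝔾.inv g) u * x) = P.act g x := by
      rw [P.act_mul g _ (P.act_mem_inv hu) x hx.1, P.act_act hu, huu]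
    rw [hconv, 𝔾.mul_id g p] at hsm
    exact memJ _ _ (𝔾.unit_r g) (P.subset_r g hact) (push g _ hact hsm)
  rcases hg J ⟨hJideal, hJinv⟩ with hcase | hcase
  · exact absurd hcase hJne
  -- J = univ implies I = carrier
  apply Set.Subset.antisymm hIcar
  intro b hb
  rw [← Finsupp.sum_single b]
  unfold Finsupp.sum
  apply Finset.sum_induction _ (· ∈ I) (fun u v hu hv => hIadd u hu v hv) hI0mem
  intro g _
  have hbg : b g ∈ P.D g := hb g
  have hbgr : b g ∈ P.D (𝔾.r g) := P.subset_r g hbg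
  have hbgJ : b g ∈ J := by rw [hcase]; trivial
  have h1 : Finsupp.single (𝔾.r g) (b g) ∈ I := singleI _ _ (𝔾.unit_r g) hbgr hbgJ
  obtain ⟨u, hu, huu⟩ := (hsu g _ hbg).1
  have hsm := (hImul _ h1 _ (P.single_mem_carrier hu)).1
  have p : 𝔾.s (𝔾.r g) = 𝔾.r g := 𝔾.s_of_r g
  rw [P.skewMul_single_single, dif_pos p] at hsm
  have hinv : 𝔾.inv (𝔾.r g) = 𝔾.r g := 𝔾.inv_unit (𝔾.unit_r g)
  have hbu : b g * u ∈ P.D (𝔾.r g) := ((P.unit_ideal (𝔾.unit_r g)).2.2.2 _ hbgr u).1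
  rw [hinv, P.act_unit _ (𝔾.unit_r g) _ hbgr, P.act_unit _ (𝔾.unit_r g) _ hbu,
    huu, 𝔾.id_mul g p] at hsm
  exact hsm

end PartialAction

end Aux

/-- **Statement 11.** `R` is `G`-simple if, and only if, `R ⋊_α G` is graded simple. -/
theorem gSimple_iff_gradedSimple {G R : Type*} [NonUnitalRing R]
    (𝔾 : DGroupoid G) (P : PartialAction 𝔾 R)
    (hsu : ∀ g, IsSUnitalSet (P.D g)) (hds : P.directSum) :
    P.GSimple ↔ P.GradedSimple := by
  exact ⟨fun h => P.gradedSimple_of_gSimple hsu hds h,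
    fun h => P.gSimple_of_gradedSimple hsu hds h⟩
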